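/- Let M = SM(U) be a loopless and coloopless Schubert matroid on [n] of rank r. A Delannoy path P associated to SM(U) is admissible if and only if both of the following diagonal-free Delannoy paths associated to SM(U) are admissible: the path obtained from P by replacing every diagonal step with a north step immediately followed by an east step, and the path obtained from P by replacing every diagonal step with an east step immediately followed by a north step. -/

import Mathlib

open scoped Classical

namespace GPoly

/-- A step of a Delannoy path: east `+(1,0)`, north `+(0,1)` or diagonal `+(1,1)`. -/
inductive DStep : Type
  | east : DStep
  | north : DStep
  | diag : DStep
  deriving DecidableEq

/-- Horizontal displacement of a step. -/
def DStep.dx : DStep → ℕ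
  | .east => 1
  | .north => 0
  | .diag => 1

/-- Vertical displacement of a step. -/
def DStep.dy : DStep → ℕ
  | .east => 0
  | .north => 1
  | .diag => 1

/-- Position reached after the first `k` steps of `P`, starting at the point `s`. -/
def pathPos (s : ℕ × ℕ) (P : List DStep) (k : ℕ) : ℕ × ℕ :=
  (s.1 + ((P.take k).map DStep.dx).sum, s.2 + ((P.take k).map DStep.dy).sum)

/-- The Gale order: `U ≤ B` iff the increasing enumerations satisfy `u_ℓ ≤ b_ℓ`. -/
def galeLe {α : Type*} [LinearOrder α] (U B : Finset α) : Prop :=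
  List.Forall₂ (· ≤ ·) (U.sort (· ≤ ·)) (B.sort (· ≤ ·))

/-- Bases of the Schubert matroid `SM(U)` of rank `r` on `[n] = {1, …, n}`:
all `r`-subsets `B` of `[n]` with `U ≤ B` in the Gale order. -/
noncomputable def schubertBases (n r : ℕ) (U : Finset ℕ) : Finset (Finset ℕ) :=
  (Finset.Icc 1 n).powerset.filter fun B => B.card = r ∧ galeLe U B

/-- The point `p` lies weakly below the lattice path `path(U)`. -/
def belowPath (U : Finset ℕ) (p : ℕ × ℕ) : Prop :=
  p.2 ≤ (U ∩ Finset.Icc 1 (p.1 + p.2)).card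

/-- `path(U)` traverses the vertical unit segment from `(x, y)` to `(x, y+1)`
(by its north step number `x + y + 1`). -/
def uVertSeg (U : Finset ℕ) (x y : ℕ) : Prop :=
  x + y + 1 ∈ U ∧ (U ∩ Finset.Icc 1 (x + y + 1)).card = y + 1

/-- A Delannoy path associated to `SM(U)`: starts at `(1,1)`, ends at `(n-r, r)` and
stays weakly below `path(U)`. -/
def IsDelannoy (n r : ℕ) (U : Finset ℕ) (P : List DStep) : Prop :=
  pathPos (1, 1) P P.length = (n - r, r) ∧
    ∀ k ≤ P.length, belowPath U (pathPos (1, 1) P k)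

/-- Admissible Delannoy path associated to `SM(U)`. -/
def IsAdmissible (n r : ℕ) (U : Finset ℕ) (P : List DStep) : Prop :=
  IsDelannoy n r U P ∧
    ∀ (k : ℕ) (h : k < P.length),
      (P.get ⟨k, h⟩ = DStep.north →
        pathPos (1, 1) P (k + 1) = (n - r, r) ∨
          ¬ uVertSeg U (pathPos (1, 1) P k).1 (pathPos (1, 1) P k).2) ∧
      (P.get ⟨k, h⟩ = DStep.diag →
        belowPath U ((pathPos (1, 1) P k).1, (pathPos (1, 1) P k).2 + 1) ∧
          ¬ uVertSeg U (pathPos (1, 1) P k).1 (pathPos (1, 1) P k).2)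

/-- Number of diagonal steps of a path. -/
def diagCount (P : List DStep) : ℕ := (P.filter (· = DStep.diag)).length

/-- The set of indices (0-based) of the diagonal steps of `P`. -/
def diagIndices (P : List DStep) : Finset ℕ :=
  (Finset.range P.length).filter fun k => P.getD k DStep.east = DStep.diag

/-- Replace a diagonal step by a north step followed by an east step. -/
def expandNE : DStep → List DStep
  | DStep.diag => [DStep.north, DStep.east]
  | s => [s]

/-- Replace a diagonal step by an east step followed by a north step. -/
def expandEN : DStep → List DStep
  | DStep.diag => [DStep.east, DStep.north]
  | s => [s]

/-- The full lattice path of `B_P`: an east step, a north step, then the steps of `P`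
with each diagonal step replaced by a north step immediately followed by an east step. -/
def fullPath (P : List DStep) : List DStep :=
  DStep.east :: DStep.north :: (P.map expandNE).flatten

/-- The subset of `[n]` whose `path` is the given (diagonal-free) list of steps:
the set of (1-based) positions of the north steps. -/
def northSet (L : List DStep) : Finset ℕ :=
  ((Finset.range L.length).filter fun k => L.getD k DStep.east = DStep.north).image (· + 1)

/-- The basis `B_P` associated to a Delannoy path `P`. -/
def delannoyBasis (P : List DStep) : Finset ℕ := northSet (fullPath P)

/-! ### Matroid notions for a family of bases -/

/-- `S` is independent for the basis family `ℬ`: it is contained in some basis. -/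
def famIndep (ℬ : Finset (Finset ℕ)) (S : Finset ℕ) : Prop := ∃ B ∈ ℬ, S ⊆ B

/-- `C` is a circuit for the basis family `ℬ`: a minimal dependent set. -/
def famCircuit (ℬ : Finset (Finset ℕ)) (C : Finset ℕ) : Prop :=
  ¬ famIndep ℬ C ∧ ∀ C' ⊂ C, famIndep ℬ C'

/-- The dual basis family on the ground set `E`: complements of bases. -/
noncomputable def famDual (E : Finset ℕ) (ℬ : Finset (Finset ℕ)) : Finset (Finset ℕ) :=
  ℬ.image fun B => E \ B

/-- `e ∉ B` is externally active: `e` is the smallest element of the unique circuit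
contained in `B ∪ {e}`. -/
def ExtActive (E : Finset ℕ) (ℬ : Finset (Finset ℕ)) (B : Finset ℕ) (e : ℕ) : Prop :=
  e ∈ E ∧ e ∉ B ∧
    ∃ C, C ⊆ insert e B ∧ famCircuit ℬ C ∧ e ∈ C ∧ ∀ x ∈ C, e ≤ x

/-- `i ∈ B` is internally active: `i` is the smallest element of the unique cocircuit
contained in `(E ∖ B) ∪ {i}`. -/
def IntActive (E : Finset ℕ) (ℬ : Finset (Finset ℕ)) (B : Finset ℕ) (i : ℕ) : Prop :=
  i ∈ B ∧
    ∃ C, C ⊆ insert i (E \ B) ∧ famCircuit (famDual E ℬ) C ∧ i ∈ C ∧ ∀ x ∈ C, i ≤ x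

/-- External activity `e(B)`. -/
noncomputable def extAct (E : Finset ℕ) (ℬ : Finset (Finset ℕ)) (B : Finset ℕ) : ℕ :=
  (E.filter (ExtActive E ℬ B)).card

/-- Internal activity `i(B)`. -/
noncomputable def intAct (E : Finset ℕ) (ℬ : Finset (Finset ℕ)) (B : Finset ℕ) : ℕ :=
  (E.filter (IntActive E ℬ B)).card

/-- The statistic `α(B)`: the number of `i ∈ B` such that `B' = (B ∖ {i}) ∪ {i+1}`
is a basis with `e(B') = e(B)` and `i(B') = i(B)`. -/
noncomputable def alphaStat (E : Finset ℕ) (ℬ : Finset (Finset ℕ)) (B : Finset ℕ) : ℕ :=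
  (B.filter fun i =>
    insert (i + 1) (B.erase i) ∈ ℬ ∧
      extAct E ℬ (insert (i + 1) (B.erase i)) = extAct E ℬ B ∧
      intAct E ℬ (insert (i + 1) (B.erase i)) = intAct E ℬ B).card

/-- The rank function determined by a family of bases. -/
noncomputable def famRank (ℬ : Finset (Finset ℕ)) (A : Finset ℕ) : ℕ :=
  ℬ.sup fun B => (A ∩ B).card

/-- The β-invariant: `β(M) = (−1)^{rk(E)} Σ_{A ⊆ E} (−1)^{|A|} rk(A)`. -/
noncomputable def betaInv (E : Finset ℕ) (ℬ : Finset (Finset ℕ)) : ℤ :=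
  (-1) ^ famRank ℬ E * ∑ A ∈ E.powerset, (-1) ^ A.card * (famRank ℬ A : ℤ)

/-- `ℬ` is the collection of bases of a matroid with ground set `E`:
it is a nonempty family of subsets of `E` satisfying the basis exchange property. -/
def IsBasisFamily (E : Finset ℕ) (ℬ : Finset (Finset ℕ)) : Prop :=
  ℬ.Nonempty ∧ (∀ B ∈ ℬ, B ⊆ E) ∧
    ∀ B₁ ∈ ℬ, ∀ B₂ ∈ ℬ, ∀ x ∈ B₁ \ B₂, ∃ y ∈ B₂ \ B₁, insert y (B₁.erase x) ∈ ℬ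

/-- Two elements lie in a common component: they are equal or in a common circuit. -/
def connRel (ℬ : Finset (Finset ℕ)) (e f : ℕ) : Prop :=
  e = f ∨ ∃ C, famCircuit ℬ C ∧ e ∈ C ∧ f ∈ C

/-- The number of connected components of the matroid with bases `ℬ` on `E`. -/
noncomputable def numComponents (E : Finset ℕ) (ℬ : Finset (Finset ℕ)) : ℕ :=
  Set.ncard {S : Set ℕ | ∃ e ∈ E, S = {f | f ∈ E ∧ Relation.EqvGen (connRel ℬ) e f}}

/-- The matroid with bases `ℬ` on ground set `E` is connected. -/
def IsConnectedFam (E : Finset ℕ) (ℬ : Finset (Finset ℕ)) : Prop :=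
  E.Nonempty ∧ ∀ e ∈ E, ∀ f ∈ E, Relation.EqvGen (connRel ℬ) e f

/-- Series-parallel matroid: isomorphic to `U_{0,1}` or `U_{1,1}`
(a single loop or a single coloop), or connected with β-invariant `1`. -/
def IsSeriesParallel (E : Finset ℕ) (ℬ : Finset (Finset ℕ)) : Prop :=
  (E.card = 1 ∧ (ℬ = {∅} ∨ ℬ = {E})) ∨ (IsConnectedFam E ℬ ∧ betaInv E ℬ = 1)

/-- The bases of the restriction of the matroid with bases `ℬ` to the set `F`:
the maximal intersections of bases with `F`. -/
noncomputable def famRestrict (ℬ : Finset (Finset ℕ)) (F : Finset ℕ) : Finset (Finset ℕ) :=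
  (ℬ.image (· ∩ F)).filter fun S => ∀ T ∈ ℬ.image (· ∩ F), S ⊆ T → S = T

/-- The matroid with bases `ℬ` on `E` is a direct sum of series-parallel matroids. -/
def IsDirectSumOfSeriesParallel (E : Finset ℕ) (ℬ : Finset (Finset ℕ)) : Prop :=
  ∃ parts : Finset (Finset ℕ),
    (↑parts : Set (Finset ℕ)).PairwiseDisjoint id ∧
    parts.sup id = E ∧
    (∀ S ∈ parts, IsSeriesParallel S (famRestrict ℬ S)) ∧
    ℬ = E.powerset.filter fun B => ∀ S ∈ parts, B ∩ S ∈ famRestrict ℬ S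

/-! ### Base polytopes -/

/-- The indicator vector of `B ⊆ E`, as a point of `ℝ^E`. -/
noncomputable def basisVector (E : Finset ℕ) (B : Finset ℕ) : ↑E → ℝ :=
  fun e => if (e : ℕ) ∈ B then 1 else 0

/-- The base polytope of the matroid with bases `ℬ` on `E`:
the convex hull in `ℝ^E` of the indicator vectors of the bases. -/
noncomputable def basePolytope (E : Finset ℕ) (ℬ : Finset (Finset ℕ)) : Set (↑E → ℝ) :=
  convexHull ℝ (basisVector E '' (↑ℬ : Set (Finset ℕ)))

/-- The indicator function `ℝ^E → ℤ` of the base polytope. -/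
noncomputable def polyInd (E : Finset ℕ) (ℬ : Finset (Finset ℕ)) : (↑E → ℝ) → ℤ :=
  fun x => if x ∈ basePolytope E ℬ then 1 else 0

/-- The indicator function `ℝ^E → ℤ` of the relative interior of the base polytope. -/
noncomputable def relintInd (E : Finset ℕ) (ℬ : Finset (Finset ℕ)) : (↑E → ℝ) → ℤ :=
  fun x => if x ∈ intrinsicInterior ℝ (basePolytope E ℬ) then 1 else 0

/-! ### Cyclic flats and the cyclic chain lattice -/

/-- `F` is a flat of the matroid with bases `ℬ` on `E`. -/
def IsFlat (E : Finset ℕ) (ℬ : Finset (Finset ℕ)) (F : Finset ℕ) : Prop :=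
  F ⊆ E ∧ ∀ e ∈ E, famRank ℬ (insert e F) = famRank ℬ F → e ∈ F

/-- `F` is a cyclic flat: a flat whose restriction has no coloops. -/
def IsCyclicFlat (E : Finset ℕ) (ℬ : Finset (Finset ℕ)) (F : Finset ℕ) : Prop :=
  IsFlat E ℬ F ∧ ∀ e ∈ F, ¬ (∀ S ∈ famRestrict ℬ F, e ∈ S)

/-- The set of cyclic flats. -/
noncomputable def cyclicFlats (E : Finset ℕ) (ℬ : Finset (Finset ℕ)) : Finset (Finset ℕ) :=
  E.powerset.filter (IsCyclicFlat E ℬ)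

/-- A chain of cyclic flats containing the minimum and maximum of the lattice of
cyclic flats; these are the elements (other than the top `1̂`) of the cyclic
chain lattice. -/
def IsCyclicChain (E : Finset ℕ) (ℬ : Finset (Finset ℕ)) (C : Finset (Finset ℕ)) : Prop :=
  ↑C ⊆ (cyclicFlats E ℬ : Set (Finset ℕ)) ∧ IsChain (· ⊆ ·) (↑C : Set (Finset ℕ)) ∧
    (∃ F ∈ C, ∀ G ∈ cyclicFlats E ℬ, F ⊆ G) ∧
    (∃ F ∈ C, ∀ G ∈ cyclicFlats E ℬ, G ⊆ F)

/-- The set of chains of cyclic flats containing the minimum and the maximum. -/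
noncomputable def cyclicChains (E : Finset ℕ) (ℬ : Finset (Finset ℕ)) :
    Finset (Finset (Finset ℕ)) :=
  (cyclicFlats E ℬ).powerset.filter (IsCyclicChain E ℬ)

/-- The rank function `A ↦ min_{Z ∈ C} (rk_M(Z) + |A ∖ Z|)` associated to a chain `C`. -/
noncomputable def chainRank (ℬ : Finset (Finset ℕ)) (C : Finset (Finset ℕ))
    (A : Finset ℕ) : ℕ :=
  if h : C.Nonempty then C.inf' h fun Z => famRank ℬ Z + (A \ Z).card else A.card

/-- The bases of the matroid on `E` with rank function `rk`:
the subsets `B ⊆ E` with `rk B = |B| = rk E`. -/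
noncomputable def basesOfRank (E : Finset ℕ) (rk : Finset ℕ → ℕ) : Finset (Finset ℕ) :=
  E.powerset.filter fun B => rk B = B.card ∧ rk B = rk E

/-- The bases of the Schubert matroid `S_C` associated to a chain `C` of cyclic flats. -/
noncomputable def chainSchubert (E : Finset ℕ) (ℬ : Finset (Finset ℕ))
    (C : Finset (Finset ℕ)) : Finset (Finset ℕ) :=
  basesOfRank E (chainRank ℬ C)

/-- The point reached by `path(S)` after `k` steps. -/
def pathPoint (S : Finset ℕ) (k : ℕ) : ℕ × ℕ :=
  (k - (S ∩ Finset.Icc 1 k).card, (S ∩ Finset.Icc 1 k).card)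


/-! new material -/

def eg (a b : DStep) : DStep → List DStep := fun s => if s = DStep.diag then [a, b] else [s]

lemma expandNE_eq : expandNE = eg DStep.north DStep.east := by
  funext s; cases s <;> rfl

lemma expandEN_eq : expandEN = eg DStep.east DStep.north := by
  funext s; cases s <;> rfl

def el (a b : DStep) (P : List DStep) (k : ℕ) : ℕ :=
  (((P.take k).map (eg a b)).flatten).length

variable {a b : DStep}

lemma sum_dx_flatten (hdx : a.dx + b.dx = 1) :
    ∀ L : List DStep, ((L.map (eg a b)).flatten.map DStep.dx).sum = (L.map DStep.dx).sum := by
  intro L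
  induction L with
  | nil => rfl
  | cons s t ih =>
    simp only [List.map_cons, List.flatten_cons, List.map_append, List.sum_append, ih]
    congr 1
    by_cases hs : s = DStep.diag
    · subst hs; simpa [eg, DStep.dx] using hdx
    · simp [eg, hs]

lemma sum_dy_flatten (hdy : a.dy + b.dy = 1) :
    ∀ L : List DStep, ((L.map (eg a b)).flatten.map DStep.dy).sum = (L.map DStep.dy).sum := by
  intro L
  induction L with
  | nil => rfl
  | cons s t ih =>
    simp only [List.map_cons, List.flatten_cons, List.map_append, List.sum_append, ih]
    congr 1
    by_cases hs : s = DStep.diag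
    · subst hs; simpa [eg, DStep.dy] using hdy
    · simp [eg, hs]

lemma flatten_split (P : List DStep) (k : ℕ) :
    (P.map (eg a b)).flatten
      = ((P.take k).map (eg a b)).flatten ++ ((P.drop k).map (eg a b)).flatten := by
  rw [← List.flatten_append, ← List.map_append, List.take_append_drop]

lemma flatten_take (P : List DStep) (k : ℕ) :
    ((P.map (eg a b)).flatten).take (el a b P k) = ((P.take k).map (eg a b)).flatten := by
  rw [flatten_split P k]; exact List.take_left

lemma flatten_drop (P : List DStep) (k : ℕ) :
    ((P.map (eg a b)).flatten).drop (el a b P k) = ((P.drop k).map (eg a b)).flatten := by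
  rw [flatten_split P k]; exact List.drop_left

lemma el_le_length (P : List DStep) (k : ℕ) :
    el a b P k ≤ ((P.map (eg a b)).flatten).length := by
  have h := congrArg List.length (flatten_take (a := a) (b := b) P k)
  rw [List.length_take] at h
  have h2 : (((P.take k).map (eg a b)).flatten).length = el a b P k := rfl
  omega

lemma pathPos_flatten (hdx : a.dx + b.dx = 1) (hdy : a.dy + b.dy = 1)
    (s : ℕ × ℕ) (P : List DStep) (k : ℕ) :
    pathPos s ((P.map (eg a b)).flatten) (el a b P k) = pathPos s P k := by
  unfold pathPos
  rw [flatten_take, sum_dx_flatten hdx, sum_dy_flatten hdy]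

lemma el_succ (P : List DStep) {k : ℕ} (hk : k < P.length) :
    el a b P (k + 1) = el a b P k + (eg a b (P[k])).length := by
  unfold el
  rw [List.take_succ, List.getElem?_eq_getElem hk]
  rw [Option.toList_some, List.map_append, List.flatten_append, List.length_append]
  simp

lemma el_length (P : List DStep) :
    el a b P P.length = ((P.map (eg a b)).flatten).length := by
  unfold el; rw [List.take_length]


lemma eg_len (a b : DStep) (s : DStep) :
    (eg a b s).length = if s = DStep.diag then 2 else 1 := by
  by_cases h : s = DStep.diag <;> simp [eg, h]

lemma el_plus_le (P : List DStep) {k : ℕ} (hk : k < P.length) {j : ℕ}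
    (hj : j < (eg a b (P[k])).length) :
    el a b P k + j < ((P.map (eg a b)).flatten).length := by
  have h1 := el_succ (a := a) (b := b) P hk
  have h2 := el_le_length (a := a) (b := b) P (k + 1)
  omega

lemma get_el (P : List DStep) {k : ℕ} (hk : k < P.length) {j : ℕ}
    (hj : j < (eg a b (P[k])).length) :
    ((P.map (eg a b)).flatten)[el a b P k + j]'(el_plus_le P hk hj)
      = (eg a b (P[k]))[j] := by
  have h1 : ((P.map (eg a b)).flatten).drop (el a b P k)
      = eg a b (P[k]) ++ ((P.drop (k+1)).map (eg a b)).flatten := by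
    rw [flatten_drop, List.drop_eq_getElem_cons hk, List.map_cons, List.flatten_cons]
  have h2 : j < (((P.map (eg a b)).flatten).drop (el a b P k)).length := by
    rw [h1, List.length_append]; omega
  calc ((P.map (eg a b)).flatten)[el a b P k + j]'(el_plus_le P hk hj)
      = (((P.map (eg a b)).flatten).drop (el a b P k))[j]'h2 := List.getElem_drop.symm
    _ = (eg a b (P[k]) ++ ((P.drop (k+1)).map (eg a b)).flatten)[j]'(by
          rw [← h1]; exact h2) := List.getElem_of_eq h1 _
    _ = (eg a b (P[k]))[j] := List.getElem_append_left hj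

lemma el_cons_succ (s : DStep) (t : List DStep) (k : ℕ) :
    el a b (s :: t) (k + 1) = (eg a b s).length + el a b t k := by
  unfold el
  simp

lemma el_surj (P : List DStep) :
    ∀ j, j < ((P.map (eg a b)).flatten).length →
      ∃ k, ∃ hk : k < P.length,
        j = el a b P k ∨ (j = el a b P k + 1 ∧ P[k] = DStep.diag) := by
  induction P with
  | nil => intro j hj; simp at hj
  | cons s t ih =>
    intro j hj
    by_cases hs : j < (eg a b s).length
    · by_cases hd : s = DStep.diag
      · have hl : (eg a b s).length = 2 := by rw [eg_len, if_pos hd]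
        have h0 : el a b (s :: t) 0 = 0 := rfl
        rcases (by omega : j = 0 ∨ j = 1) with h | h
        · exact ⟨0, by simp, Or.inl (by simp [h, h0])⟩
        · exact ⟨0, by simp, Or.inr ⟨by simp [h, h0], by simpa using hd⟩⟩
      · have hl : (eg a b s).length = 1 := by rw [eg_len, if_neg hd]
        have h : j = 0 := by omega
        exact ⟨0, by simp, Or.inl (by simp [h]; rfl)⟩
    · push_neg at hs
      have hj' : j - (eg a b s).length < ((t.map (eg a b)).flatten).length := by
        have : ((( s :: t).map (eg a b)).flatten).length
            = (eg a b s).length + ((t.map (eg a b)).flatten).length := by simp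
        omega
      obtain ⟨k, hk, hcase⟩ := ih _ hj'
      refine ⟨k + 1, by simpa using Nat.succ_lt_succ hk, ?_⟩
      rw [el_cons_succ]
      have hget : (s :: t)[k + 1]'(by simpa using Nat.succ_lt_succ hk) = t[k] := by simp
      rcases hcase with h | ⟨h, h2⟩
      · exact Or.inl (by omega)
      · exact Or.inr ⟨by omega, by rw [hget]; exact h2⟩

lemma pathPos_succ (s : ℕ × ℕ) (L : List DStep) {m : ℕ} (hm : m < L.length) :
    pathPos s L (m + 1) = ((pathPos s L m).1 + (L[m]).dx, (pathPos s L m).2 + (L[m]).dy) := by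
  unfold pathPos
  rw [List.take_succ, List.getElem?_eq_getElem hm, Option.toList_some,
    List.map_append, List.sum_append, List.map_append, List.sum_append]
  simp [add_assoc]

lemma pathPos_fst_mono (s : ℕ × ℕ) (L : List DStep) {j m : ℕ} (hjm : j ≤ m) :
    (pathPos s L j).1 ≤ (pathPos s L m).1 := by
  unfold pathPos
  simp only
  have h1 : (L.take m).take j = L.take j := by rw [List.take_take, min_eq_left hjm]
  have h2 := List.sum_take_add_sum_drop ((L.take m).map DStep.dx) j
  rw [← List.map_take, h1] at h2
  omega


/-! helper lemmas -/


lemma card_inter_mono (U : Finset ℕ) {m m' : ℕ} (h : m ≤ m') :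
    (U ∩ Finset.Icc 1 m).card ≤ (U ∩ Finset.Icc 1 m').card :=
  Finset.card_le_card
    (Finset.inter_subset_inter (le_refl U) (Finset.Icc_subset_Icc_right h))

lemma belowPath_east {U : Finset ℕ} {x y : ℕ} (h : belowPath U (x, y)) :
    belowPath U (x + 1, y) := by
  unfold belowPath at *
  simp only at *
  have hc := card_inter_mono U (show x + y ≤ x + 1 + y by omega)
  omega

lemma card_inter_Icc_succ {U : Finset ℕ} {m : ℕ} (h : m + 1 ∈ U) :
    (U ∩ Finset.Icc 1 (m + 1)).card = (U ∩ Finset.Icc 1 m).card + 1 := by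
  have heq : U ∩ Finset.Icc 1 (m + 1) = insert (m + 1) (U ∩ Finset.Icc 1 m) := by
    ext z
    simp only [Finset.mem_inter, Finset.mem_Icc, Finset.mem_insert]
    constructor
    · rintro ⟨hz, h1, h2⟩
      rcases eq_or_lt_of_le h2 with h3 | h3
      · exact Or.inl h3
      · exact Or.inr ⟨hz, h1, by omega⟩
    · rintro (rfl | ⟨hz, h1, h2⟩)
      · exact ⟨h, by omega, le_rfl⟩
      · exact ⟨hz, h1, by omega⟩
  rw [heq, Finset.card_insert_of_notMem (by simp [Finset.mem_inter, Finset.mem_Icc])]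

lemma not_vert_of_below {U : Finset ℕ} {x y : ℕ} (h : belowPath U (x, y + 1)) :
    ¬ uVertSeg U (x + 1) y := by
  rintro ⟨h1, h2⟩
  unfold belowPath at h
  simp only at h
  have hxx : x + (y + 1) = x + y + 1 := by omega
  rw [hxx] at h
  have hx : x + 1 + y + 1 = (x + y + 1) + 1 := by omega
  rw [hx] at h1 h2
  have := card_inter_Icc_succ h1
  omega

lemma eg_diag (a b : DStep) : eg a b DStep.diag = [a, b] := rfl
lemma eg_east (a b : DStep) : eg a b DStep.east = [DStep.east] := rfl
lemma eg_north (a b : DStep) : eg a b DStep.north = [DStep.north] := rfl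

lemma get_el_val (P : List DStep) {k : ℕ} (hk : k < P.length) {s : DStep}
    (hs : P[k] = s) {j : ℕ} (hj : j < (eg a b s).length)
    (hq : el a b P k + j < ((P.map (eg a b)).flatten).length) :
    ((P.map (eg a b)).flatten)[el a b P k + j]'hq = (eg a b s)[j] := by
  have hj' : j < (eg a b (P[k])).length := by rw [hs]; exact hj
  rw [get_el P hk hj']
  exact List.getElem_of_eq (congrArg (eg a b) hs) hj'

lemma el_plus_lt (P : List DStep) {k : ℕ} (hk : k < P.length) {s : DStep}
    (hs : P[k] = s) {j : ℕ} (hj : j < (eg a b s).length) :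
    el a b P k + j < ((P.map (eg a b)).flatten).length :=
  el_plus_le P hk (by rw [hs]; exact hj)

lemma admissible_NE {n r : ℕ} {U : Finset ℕ} {P : List DStep}
    (h : IsAdmissible n r U P) :
    IsAdmissible n r U ((P.map expandNE).flatten) := by
  rw [expandNE_eq]
  obtain ⟨⟨hend, hbelow⟩, hstep⟩ := h
  have hposQ : ∀ k, pathPos (1,1) ((P.map (eg .north .east)).flatten) (el .north .east P k)
      = pathPos (1,1) P k := fun k =>
    pathPos_flatten (a := DStep.north) (b := DStep.east) rfl rfl _ P k
  have hQlen : ((P.map (eg .north .east)).flatten).length = el .north .east P P.length :=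
    (el_length P).symm
  have hdiagpos : ∀ k (hk : k < P.length), P[k] = DStep.diag →
      pathPos (1,1) ((P.map (eg .north .east)).flatten) (el .north .east P k + 1)
        = ((pathPos (1,1) P k).1, (pathPos (1,1) P k).2 + 1) := by
    intro k hk hdiag
    have h0 : (0:ℕ) < (eg DStep.north DStep.east DStep.diag).length := by simp [eg_diag]
    have hel := el_plus_lt P hk hdiag h0
    rw [Nat.add_zero] at hel
    have hget : ((P.map (eg .north .east)).flatten)[el .north .east P k]'hel
        = DStep.north := by
      have h2 := get_el_val P hk hdiag h0 (el_plus_lt P hk hdiag h0)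
      simpa [eg_diag] using h2
    rw [pathPos_succ _ _ hel, hget, hposQ k]
    simp [DStep.dx, DStep.dy]
  refine ⟨⟨?_, ?_⟩, ?_⟩
  · rw [hQlen, hposQ]; exact hend
  · intro j hj
    rcases eq_or_lt_of_le hj with heq | hlt
    · rw [heq, hQlen, hposQ]; exact hbelow P.length le_rfl
    · obtain ⟨k, hk, hcase⟩ := el_surj P j hlt
      rcases hcase with rfl | ⟨rfl, hdiag⟩
      · rw [hposQ]; exact hbelow k hk.le
      · rw [hdiagpos k hk hdiag]
        exact ((hstep k hk).2 (by rw [List.get_eq_getElem]; exact hdiag)).1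
  · intro j hj
    obtain ⟨k, hk, hcase⟩ := el_surj P j hj
    rcases hcase with rfl | ⟨rfl, hdiag⟩
    · cases hPk : P[k] with
      | east =>
        have hget : ((P.map (eg .north .east)).flatten).get ⟨el .north .east P k, hj⟩
            = DStep.east := by
          rw [List.get_eq_getElem]
          have h2 := get_el_val (a := DStep.north) (b := DStep.east) P hk hPk (j := 0) (by simp [eg_east])
            (el_plus_lt (a := DStep.north) (b := DStep.east) P hk hPk (by simp [eg_east]))
          simpa [eg_east] using h2
        constructor <;> intro heq <;> rw [hget] at heq <;> simp at heq
      | north =>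
        have hget : ((P.map (eg .north .east)).flatten).get ⟨el .north .east P k, hj⟩
            = DStep.north := by
          rw [List.get_eq_getElem]
          have h2 := get_el_val (a := DStep.north) (b := DStep.east) P hk hPk (j := 0) (by simp [eg_north])
            (el_plus_lt (a := DStep.north) (b := DStep.east) P hk hPk (by simp [eg_north]))
          simpa [eg_north] using h2
        have hsucc : el .north .east P (k+1) = el .north .east P k + 1 := by
          rw [el_succ P hk, hPk]; simp [eg_north]
        refine ⟨fun _ => ?_, fun heq => by rw [hget] at heq; simp at heq⟩
        rcases (hstep k hk).1 (by rw [List.get_eq_getElem]; exact hPk) with h1 | h1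
        · left; rw [← hsucc, hposQ]; exact h1
        · right; rw [hposQ]; exact h1
      | diag =>
        have hget : ((P.map (eg .north .east)).flatten).get ⟨el .north .east P k, hj⟩
            = DStep.north := by
          rw [List.get_eq_getElem]
          have h2 := get_el_val (a := DStep.north) (b := DStep.east) P hk hPk (j := 0) (by simp [eg_diag])
            (el_plus_lt (a := DStep.north) (b := DStep.east) P hk hPk (by simp [eg_diag]))
          simpa [eg_diag] using h2
        refine ⟨fun _ => Or.inr ?_, fun heq => by rw [hget] at heq; simp at heq⟩
        rw [hposQ]
        exact ((hstep k hk).2 (by rw [List.get_eq_getElem]; exact hPk)).2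
    · have hget : ((P.map (eg .north .east)).flatten).get ⟨el .north .east P k + 1, hj⟩
          = DStep.east := by
        rw [List.get_eq_getElem]
        have h2 := get_el_val (a := DStep.north) (b := DStep.east) P hk hdiag (j := 1) (by simp [eg_diag])
          (el_plus_lt (a := DStep.north) (b := DStep.east) P hk hdiag (by simp [eg_diag]))
        simpa [eg_diag] using h2
      constructor <;> intro heq <;> rw [hget] at heq <;> simp at heq

lemma belowPath_east' {U : Finset ℕ} {p : ℕ × ℕ} (h : belowPath U p) :
    belowPath U (p.1 + 1, p.2) := by
  obtain ⟨x, y⟩ := p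
  exact belowPath_east h

lemma admissible_EN {n r : ℕ} {U : Finset ℕ} {P : List DStep}
    (h : IsAdmissible n r U P) :
    IsAdmissible n r U ((P.map expandEN).flatten) := by
  rw [expandEN_eq]
  obtain ⟨⟨hend, hbelow⟩, hstep⟩ := h
  have hposQ : ∀ k, pathPos (1,1) ((P.map (eg .east .north)).flatten) (el .east .north P k)
      = pathPos (1,1) P k := fun k =>
    pathPos_flatten (a := DStep.east) (b := DStep.north) rfl rfl _ P k
  have hQlen : ((P.map (eg .east .north)).flatten).length = el .east .north P P.length :=
    (el_length P).symm
  have hdiagpos : ∀ k (hk : k < P.length), P[k] = DStep.diag →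
      pathPos (1,1) ((P.map (eg .east .north)).flatten) (el .east .north P k + 1)
        = ((pathPos (1,1) P k).1 + 1, (pathPos (1,1) P k).2) := by
    intro k hk hdiag
    have h0 : (0:ℕ) < (eg DStep.east DStep.north DStep.diag).length := by simp [eg_diag]
    have hel := el_plus_lt (a := DStep.east) (b := DStep.north) P hk hdiag h0
    rw [Nat.add_zero] at hel
    have hget : ((P.map (eg .east .north)).flatten)[el .east .north P k]'hel
        = DStep.east := by
      have h2 := get_el_val (a := DStep.east) (b := DStep.north) P hk hdiag h0
        (el_plus_lt (a := DStep.east) (b := DStep.north) P hk hdiag h0)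
      simpa [eg_diag] using h2
    rw [pathPos_succ _ _ hel, hget, hposQ k]
    simp [DStep.dx, DStep.dy]
  refine ⟨⟨?_, ?_⟩, ?_⟩
  · rw [hQlen, hposQ]; exact hend
  · intro j hj
    rcases eq_or_lt_of_le hj with heq | hlt
    · rw [heq, hQlen, hposQ]; exact hbelow P.length le_rfl
    · obtain ⟨k, hk, hcase⟩ := el_surj P j hlt
      rcases hcase with rfl | ⟨rfl, hdiag⟩
      · rw [hposQ]; exact hbelow k hk.le
      · rw [hdiagpos k hk hdiag]
        exact belowPath_east' (hbelow k hk.le)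
  · intro j hj
    obtain ⟨k, hk, hcase⟩ := el_surj P j hj
    rcases hcase with rfl | ⟨rfl, hdiag⟩
    · cases hPk : P[k] with
      | east =>
        have hget : ((P.map (eg .east .north)).flatten).get ⟨el .east .north P k, hj⟩
            = DStep.east := by
          rw [List.get_eq_getElem]
          have h2 := get_el_val (a := DStep.east) (b := DStep.north) P hk hPk (j := 0)
            (by simp [eg_east]) (el_plus_lt (a := DStep.east) (b := DStep.north) P hk hPk
              (by simp [eg_east]))
          simpa [eg_east] using h2
        constructor <;> intro heq <;> rw [hget] at heq <;> simp at heq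
      | north =>
        have hget : ((P.map (eg .east .north)).flatten).get ⟨el .east .north P k, hj⟩
            = DStep.north := by
          rw [List.get_eq_getElem]
          have h2 := get_el_val (a := DStep.east) (b := DStep.north) P hk hPk (j := 0)
            (by simp [eg_north]) (el_plus_lt (a := DStep.east) (b := DStep.north) P hk hPk
              (by simp [eg_north]))
          simpa [eg_north] using h2
        have hsucc : el .east .north P (k+1) = el .east .north P k + 1 := by
          rw [el_succ P hk, hPk]; simp [eg_north]
        refine ⟨fun _ => ?_, fun heq => by rw [hget] at heq; simp at heq⟩
        rcases (hstep k hk).1 (by rw [List.get_eq_getElem]; exact hPk) with h1 | h1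
        · left; rw [← hsucc, hposQ]; exact h1
        · right; rw [hposQ]; exact h1
      | diag =>
        have hget : ((P.map (eg .east .north)).flatten).get ⟨el .east .north P k, hj⟩
            = DStep.east := by
          rw [List.get_eq_getElem]
          have h2 := get_el_val (a := DStep.east) (b := DStep.north) P hk hPk (j := 0)
            (by simp [eg_diag]) (el_plus_lt (a := DStep.east) (b := DStep.north) P hk hPk
              (by simp [eg_diag]))
          simpa [eg_diag] using h2
        constructor <;> intro heq <;> rw [hget] at heq <;> simp at heq
    · have hget : ((P.map (eg .east .north)).flatten).get ⟨el .east .north P k + 1, hj⟩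
          = DStep.north := by
        rw [List.get_eq_getElem]
        have h2 := get_el_val (a := DStep.east) (b := DStep.north) P hk hdiag (j := 1)
          (by simp [eg_diag]) (el_plus_lt (a := DStep.east) (b := DStep.north) P hk hdiag
            (by simp [eg_diag]))
        simpa [eg_diag] using h2
      refine ⟨fun _ => Or.inr ?_, fun heq => by rw [hget] at heq; simp at heq⟩
      rw [hdiagpos k hk hdiag]
      simp only
      exact not_vert_of_below
        (((hstep k hk).2 (by rw [List.get_eq_getElem]; exact hdiag)).1)

lemma admissible_of_NE {n r : ℕ} {U : Finset ℕ} {P : List DStep}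
    (hP : IsDelannoy n r U P)
    (h : IsAdmissible n r U ((P.map expandNE).flatten)) :
    IsAdmissible n r U P := by
  rw [expandNE_eq] at h
  obtain ⟨⟨hendQ, hbelowQ⟩, hstepQ⟩ := h
  obtain ⟨hend, hbelow⟩ := hP
  have hposQ : ∀ k, pathPos (1,1) ((P.map (eg .north .east)).flatten) (el .north .east P k)
      = pathPos (1,1) P k := fun k =>
    pathPos_flatten (a := DStep.north) (b := DStep.east) rfl rfl _ P k
  have hQlen : ((P.map (eg .north .east)).flatten).length = el .north .east P P.length :=
    (el_length P).symm
  refine ⟨⟨hend, hbelow⟩, ?_⟩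
  intro k hk
  constructor
  · intro hnorth
    have hPk : P[k] = DStep.north := by rwa [List.get_eq_getElem] at hnorth
    have hjq := el_plus_lt (a := DStep.north) (b := DStep.east) P hk hPk (j := 0)
      (by simp [eg_north])
    rw [Nat.add_zero] at hjq
    have hgetQ : ((P.map (eg .north .east)).flatten).get ⟨el .north .east P k, hjq⟩
        = DStep.north := by
      rw [List.get_eq_getElem]
      have h2 := get_el_val (a := DStep.north) (b := DStep.east) P hk hPk (j := 0)
        (by simp [eg_north]) (el_plus_lt (a := DStep.north) (b := DStep.east) P hk hPk
          (by simp [eg_north]))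
      simpa [eg_north] using h2
    have hsucc : el .north .east P (k+1) = el .north .east P k + 1 := by
      rw [el_succ P hk, hPk]; simp [eg_north]
    rcases (hstepQ _ hjq).1 hgetQ with h1 | h1
    · left; rw [← hposQ (k+1), hsucc]; exact h1
    · right; rwa [hposQ k] at h1
  · intro hdstep
    have hPk : P[k] = DStep.diag := by rwa [List.get_eq_getElem] at hdstep
    have hjq := el_plus_lt (a := DStep.north) (b := DStep.east) P hk hPk (j := 0)
      (by simp [eg_diag])
    rw [Nat.add_zero] at hjq
    have hjq1 : el .north .east P k + 1 < ((P.map (eg .north .east)).flatten).length :=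
      el_plus_lt (a := DStep.north) (b := DStep.east) P hk hPk (j := 1) (by simp [eg_diag])
    have hgetQ : ((P.map (eg .north .east)).flatten)[el .north .east P k]'hjq
        = DStep.north := by
      have h2 := get_el_val (a := DStep.north) (b := DStep.east) P hk hPk (j := 0)
        (by simp [eg_diag]) (el_plus_lt (a := DStep.north) (b := DStep.east) P hk hPk
          (by simp [eg_diag]))
      simpa [eg_diag] using h2
    have hpos1 : pathPos (1,1) ((P.map (eg .north .east)).flatten) (el .north .east P k + 1)
        = ((pathPos (1,1) P k).1, (pathPos (1,1) P k).2 + 1) := by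
      rw [pathPos_succ _ _ hjq, hgetQ, hposQ k]
      simp [DStep.dx, DStep.dy]
    have hbelow1 : belowPath U ((pathPos (1,1) P k).1, (pathPos (1,1) P k).2 + 1) := by
      have := hbelowQ (el .north .east P k + 1) (le_of_lt hjq1)
      rwa [hpos1] at this
    refine ⟨hbelow1, ?_⟩
    rcases (hstepQ _ hjq).1 (by rw [List.get_eq_getElem]; exact hgetQ) with h1 | h1
    · exfalso
      rw [hpos1] at h1
      have e1 : (pathPos (1,1) P k).1 = n - r := congrArg Prod.fst h1
      have hsucc : el .north .east P (k+1) = el .north .east P k + 2 := by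
        rw [el_succ P hk, hPk]; simp [eg_diag]
      have hpk1 : pathPos (1,1) P (k+1)
          = ((pathPos (1,1) P k).1 + 1, (pathPos (1,1) P k).2 + 1) := by
        rw [pathPos_succ _ _ hk, hPk]
        simp [DStep.dx, DStep.dy]
      have hmono : (pathPos (1,1) ((P.map (eg .north .east)).flatten)
            (el .north .east P (k+1))).1
          ≤ (pathPos (1,1) ((P.map (eg .north .east)).flatten)
            (((P.map (eg .north .east)).flatten).length)).1 :=
        pathPos_fst_mono (1,1) _ (el_le_length (a := DStep.north) (b := DStep.east) P (k+1))
      rw [hposQ (k+1), hpk1, hendQ] at hmono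
      simp only at hmono
      omega
    · rwa [hposQ k] at h1


/-- Let `SM(U)` be a loopless and coloopless Schubert matroid on `[n]`
of rank `r`. A Delannoy path `P` associated to `SM(U)` is admissible if and only if both
diagonal-free Delannoy paths obtained from `P` by replacing every diagonal step with a
north step immediately followed by an east step, respectively with an east step
immediately followed by a north step, are admissible. -/
theorem statement4 (n r : ℕ) (U : Finset ℕ) (hUsub : U ⊆ Finset.Icc 1 n)
    (hUcard : U.card = r)
    (hloopless : ∀ e ∈ Finset.Icc 1 n, ∃ B ∈ schubertBases n r U, e ∈ B)
    (hcoloopless : ∀ e ∈ Finset.Icc 1 n, ∃ B ∈ schubertBases n r U, e ∉ B)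
    (P : List DStep) (hP : IsDelannoy n r U P) :
    IsAdmissible n r U P ↔
      (IsAdmissible n r U ((P.map expandNE).flatten) ∧
       IsAdmissible n r U ((P.map expandEN).flatten)) := by
  constructor
  · intro h
    exact ⟨admissible_NE h, admissible_EN h⟩
  · rintro ⟨h1, -⟩
    exact admissible_of_NE hP h1
end GPoly
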